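/- arXiv:1403.7517 — 2 statements merged into one kernel-verified Lean document; each statement's English description precedes it below -/
import Mathlib

section
/- Let X and Y be independent random variables uniform on [-1,1] and s ∈ (0,1]. Then P(|min(X,s)| < |Y|) − P(|max(X,s)| < |Y|) = s²/2. -/
open MeasureTheory

noncomputable def unif : Measure ℝ :=
  (2 : ENNReal)⁻¹ • (volume.restrict (Set.Icc (-1 : ℝ) 1))

instance : SFinite unif := by unfold unif; infer_instance

lemma unif_abs_gt (t : ℝ) (ht0 : 0 ≤ t) (_ht1 : t ≤ 1) :
    unif {y | t < |y|} = ENNReal.ofReal (1 - t) := by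
  have hmeas : MeasurableSet {y : ℝ | t < |y|} :=
    measurableSet_lt measurable_const measurable_abs
  have hset : {y : ℝ | t < |y|} ∩ Set.Icc (-1 : ℝ) 1
      = Set.Ico (-1 : ℝ) (-t) ∪ Set.Ioc t 1 := by
    ext y
    simp only [Set.mem_inter_iff, Set.mem_setOf_eq, lt_abs, Set.mem_union, Set.mem_Ico,
      Set.mem_Ioc, Set.mem_Icc, lt_neg]
    constructor
    · rintro ⟨h | h, h1, h2⟩
      · right; exact ⟨h, h2⟩
      · left; constructor <;> linarith
    · rintro (⟨h1, h2⟩ | ⟨h1, h2⟩)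
      · exact ⟨Or.inr (by linarith), h1, by linarith⟩
      · exact ⟨Or.inl h1, by linarith, h2⟩
  have hdisj : Disjoint (Set.Ico (-1 : ℝ) (-t)) (Set.Ioc t 1) := by
    apply Set.disjoint_left.2
    rintro y ⟨_, h2⟩ ⟨h3, _⟩
    linarith
  rw [unif, Measure.smul_apply, Measure.restrict_apply hmeas, hset,
    measure_union hdisj measurableSet_Ioc, Real.volume_Ico, Real.volume_Ioc]
  have : (-t - -1 : ℝ) = 1 - t := by ring
  rw [this, ← two_mul, smul_eq_mul, ← mul_assoc,
    ENNReal.inv_mul_cancel two_ne_zero (by norm_num), one_mul]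

lemma prob_eq (f : ℝ → ℝ) (hf : Continuous f)
    (h0 : ∀ x ∈ Set.Icc (-1 : ℝ) 1, 0 ≤ f x)
    (h1 : ∀ x ∈ Set.Icc (-1 : ℝ) 1, f x ≤ 1) :
    ((unif.prod unif) {p : ℝ × ℝ | f p.1 < |p.2|}).toReal
      = (∫ x in Set.Icc (-1 : ℝ) 1, (1 - f x)) / 2 := by
  have hS : MeasurableSet {p : ℝ × ℝ | f p.1 < |p.2|} :=
    measurableSet_lt (hf.comp continuous_fst).measurable
      (continuous_abs.comp continuous_snd).measurable
  rw [Measure.prod_apply hS]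
  have hpre : ∀ x : ℝ, unif (Prod.mk x ⁻¹' {p : ℝ × ℝ | f p.1 < |p.2|})
      = unif {y : ℝ | f x < |y|} := fun x => rfl
  simp_rw [hpre]
  rw [show ∫⁻ x, unif {y : ℝ | f x < |y|} ∂unif
      = 2⁻¹ * ∫⁻ x in Set.Icc (-1 : ℝ) 1, unif {y : ℝ | f x < |y|} from
    lintegral_smul_measure _ _]
  have hcongr : ∫⁻ x in Set.Icc (-1 : ℝ) 1, unif {y : ℝ | f x < |y|}
      = ∫⁻ x in Set.Icc (-1 : ℝ) 1, ENNReal.ofReal (1 - f x) := by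
    refine setLIntegral_congr_fun measurableSet_Icc (fun x hx => ?_)
    exact unif_abs_gt (f x) (h0 x hx) (h1 x hx)
  rw [hcongr]
  have hint : IntegrableOn (fun x => 1 - f x) (Set.Icc (-1 : ℝ) 1) volume :=
    (continuous_const.sub hf).integrableOn_Icc
  have hnn : 0 ≤ᵐ[volume.restrict (Set.Icc (-1 : ℝ) 1)] fun x => 1 - f x :=
    (ae_restrict_iff' measurableSet_Icc).2 (ae_of_all _ fun x hx => by
      have := h1 x hx; simp; linarith)
  rw [← ofReal_integral_eq_lintegral_ofReal hint hnn]
  have hnn' : 0 ≤ ∫ x in Set.Icc (-1 : ℝ) 1, (1 - f x) :=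
    integral_nonneg_of_ae hnn
  rw [ENNReal.toReal_mul, ENNReal.toReal_ofReal hnn']
  simp [ENNReal.toReal_inv]
  ring

lemma int_lin (a b : ℝ) : ∫ x in a..b, (1 - x) = (b - a) - (b ^ 2 - a ^ 2) / 2 := by
  rw [intervalIntegral.integral_sub intervalIntegrable_const
    intervalIntegral.intervalIntegrable_id, intervalIntegral.integral_const,
    integral_id]
  simp

lemma int_lin' (a b : ℝ) : ∫ x in a..b, (1 + x) = (b - a) + (b ^ 2 - a ^ 2) / 2 := by
  rw [intervalIntegral.integral_add intervalIntegrable_const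
    intervalIntegral.intervalIntegrable_id, intervalIntegral.integral_const,
    integral_id]
  simp

lemma int_min (s : ℝ) (hs0 : 0 < s) (hs1 : s ≤ 1) :
    ∫ x in Set.Icc (-1 : ℝ) 1, (1 - |min x s|) = 3 / 2 - s + s ^ 2 / 2 := by
  have hc : Continuous fun x : ℝ => 1 - |min x s| :=
    continuous_const.sub (continuous_abs.comp ((continuous_id.min continuous_const)))
  rw [integral_Icc_eq_integral_Ioc,
    ← intervalIntegral.integral_of_le (by linarith : (-1 : ℝ) ≤ 1),
    ← intervalIntegral.integral_add_adjacent_intervals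
      (hc.intervalIntegrable (-1) 0) (hc.intervalIntegrable 0 1),
    ← intervalIntegral.integral_add_adjacent_intervals
      (hc.intervalIntegrable 0 s) (hc.intervalIntegrable s 1)]
  have h1 : ∫ x in (-1 : ℝ)..0, (1 - |min x s|) = ∫ x in (-1 : ℝ)..0, (1 + x) := by
    refine intervalIntegral.integral_congr fun x hx => ?_
    rw [Set.uIcc_of_le (by norm_num : (-1 : ℝ) ≤ 0)] at hx
    rw [min_eq_left (by linarith [hx.2]), abs_of_nonpos hx.2]
    ring
  have h2 : ∫ x in (0 : ℝ)..s, (1 - |min x s|) = ∫ x in (0 : ℝ)..s, (1 - x) := by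
    refine intervalIntegral.integral_congr fun x hx => ?_
    rw [Set.uIcc_of_le hs0.le] at hx
    rw [min_eq_left hx.2, abs_of_nonneg hx.1]
  have h3 : ∫ x in s..(1 : ℝ), (1 - |min x s|) = ∫ x in s..(1 : ℝ), (1 - s) := by
    refine intervalIntegral.integral_congr fun x hx => ?_
    rw [Set.uIcc_of_le hs1] at hx
    rw [min_eq_right hx.1, abs_of_nonneg hs0.le]
  rw [h1, h2, h3, int_lin, int_lin', intervalIntegral.integral_const]
  simp only [smul_eq_mul]
  ring

lemma int_max (s : ℝ) (hs0 : 0 < s) (hs1 : s ≤ 1) :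
    ∫ x in Set.Icc (-1 : ℝ) 1, (1 - |max x s|) = 3 / 2 - s - s ^ 2 / 2 := by
  have hc : Continuous fun x : ℝ => 1 - |max x s| :=
    continuous_const.sub (continuous_abs.comp ((continuous_id.max continuous_const)))
  rw [integral_Icc_eq_integral_Ioc,
    ← intervalIntegral.integral_of_le (by linarith : (-1 : ℝ) ≤ 1),
    ← intervalIntegral.integral_add_adjacent_intervals
      (hc.intervalIntegrable (-1) s) (hc.intervalIntegrable s 1)]
  have h1 : ∫ x in (-1 : ℝ)..s, (1 - |max x s|) = ∫ x in (-1 : ℝ)..s, (1 - s) := by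
    refine intervalIntegral.integral_congr fun x hx => ?_
    rw [Set.uIcc_of_le (by linarith : (-1 : ℝ) ≤ s)] at hx
    rw [max_eq_right hx.2, abs_of_nonneg hs0.le]
  have h2 : ∫ x in s..(1 : ℝ), (1 - |max x s|) = ∫ x in s..(1 : ℝ), (1 - x) := by
    refine intervalIntegral.integral_congr fun x hx => ?_
    rw [Set.uIcc_of_le hs1] at hx
    rw [max_eq_left hx.1, abs_of_nonneg (by linarith [hx.1] : (0:ℝ) ≤ x)]
  rw [h1, h2, int_lin, intervalIntegral.integral_const]
  simp only [smul_eq_mul]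
  ring

theorem stmt_3 (s : ℝ) (hs0 : 0 < s) (hs1 : s ≤ 1) :
    ((unif.prod unif) {p : ℝ × ℝ | |min p.1 s| < |p.2|}).toReal
      - ((unif.prod unif) {p : ℝ × ℝ | |max p.1 s| < |p.2|}).toReal
      = s ^ 2 / 2 := by
  have hcmin : Continuous fun x : ℝ => |min x s| :=
    continuous_abs.comp (continuous_id.min continuous_const)
  have hcmax : Continuous fun x : ℝ => |max x s| :=
    continuous_abs.comp (continuous_id.max continuous_const)
  have h0min : ∀ x ∈ Set.Icc (-1 : ℝ) 1, 0 ≤ |min x s| := fun x _ => abs_nonneg _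
  have h0max : ∀ x ∈ Set.Icc (-1 : ℝ) 1, 0 ≤ |max x s| := fun x _ => abs_nonneg _
  have h1min : ∀ x ∈ Set.Icc (-1 : ℝ) 1, |min x s| ≤ 1 := fun x hx =>
    abs_le.2 ⟨le_min hx.1 (by linarith), (min_le_right _ _).trans hs1⟩
  have h1max : ∀ x ∈ Set.Icc (-1 : ℝ) 1, |max x s| ≤ 1 := fun x hx =>
    abs_le.2 ⟨(by linarith : (-1:ℝ) ≤ s).trans (le_max_right _ _), max_le hx.2 hs1⟩
  rw [prob_eq _ hcmin h0min h1min, prob_eq _ hcmax h0max h1max,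
    int_min s hs0 hs1, int_max s hs0 hs1]
  ring
end

section
/- Let X₁,…,X_{k-1}, Z be i.i.d. uniform on [-1,1] and s ∈ [-1,0]. Then P(|min(X₁,…,X_{k-1},s)| < |Z|) = (2^k − (1−s)^k)/(k·2^{k-1}). -/
open MeasureTheory

lemma unif_apply (A : Set ℝ) (hA : MeasurableSet A) :
    unif A = 2⁻¹ * volume (A ∩ Set.Icc (-1 : ℝ) 1) := by
  simp [unif, Measure.restrict_apply hA]

lemma unif_Icc : unif (Set.Icc (-1 : ℝ) 1) = 1 := by
  rw [unif_apply _ measurableSet_Icc, Set.inter_self]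
  simp [Real.volume_Icc]
  rw [show (1 : ℝ) + 1 = 2 by norm_num]
  rw [ENNReal.ofReal_ofNat, ENNReal.inv_mul_cancel] <;> simp

instance : IsProbabilityMeasure unif := by
  constructor
  rw [unif_apply _ MeasurableSet.univ]
  simp [Real.volume_Icc]
  rw [show (1 : ℝ) + 1 = 2 by norm_num]
  rw [ENNReal.ofReal_ofNat, ENNReal.inv_mul_cancel] <;> simp

lemma unif_Ioi (c : ℝ) (h1 : -1 ≤ c) :
    unif (Set.Ioi c) = ENNReal.ofReal ((1 - c) / 2) := by
  rw [unif_apply _ measurableSet_Ioi]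
  have : Set.Ioi c ∩ Set.Icc (-1 : ℝ) 1 = Set.Ioc c 1 := by
    ext y
    simp only [Set.mem_inter_iff, Set.mem_Ioi, Set.mem_Icc, Set.mem_Ioc]
    constructor
    · rintro ⟨h, _, h2⟩; exact ⟨h, h2⟩
    · rintro ⟨h, h2⟩; exact ⟨h, by linarith, h2⟩
  rw [this, Real.volume_Ioc]
  rw [show ((1 : ℝ) - c) / 2 = 2⁻¹ * (1 - c) by ring, ENNReal.ofReal_mul (by norm_num)]
  congr 1
  rw [ENNReal.ofReal_inv_of_pos (by norm_num), ENNReal.ofReal_ofNat]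

lemma unif_abs (t : ℝ) (h0 : 0 ≤ t) :
    unif {y : ℝ | t < |y|} = ENNReal.ofReal (1 - t) := by
  have hmeas : MeasurableSet {y : ℝ | t < |y|} :=
    measurableSet_lt measurable_const continuous_abs.measurable
  rw [unif_apply _ hmeas]
  have : {y : ℝ | t < |y|} ∩ Set.Icc (-1 : ℝ) 1 = Set.Ico (-1) (-t) ∪ Set.Ioc t 1 := by
    ext y
    simp only [Set.mem_inter_iff, Set.mem_setOf_eq, Set.mem_Icc, Set.mem_union, Set.mem_Ico,
      Set.mem_Ioc, lt_abs]
    constructor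
    · rintro ⟨h | h, h1, h2⟩
      · exact Or.inr ⟨h, h2⟩
      · exact Or.inl ⟨h1, by linarith⟩
    · rintro (⟨h1, h2⟩ | ⟨h1, h2⟩)
      · exact ⟨Or.inr (by linarith), h1, by linarith⟩
      · exact ⟨Or.inl h1, by linarith, h2⟩
  rw [this, measure_union ?_ measurableSet_Ioc]
  · rw [Real.volume_Ico, Real.volume_Ioc]
    rw [show -t - -1 = 1 - t by ring, ← two_mul, ← mul_assoc,
      ENNReal.inv_mul_cancel (by norm_num) (by norm_num), one_mul]
  · rw [Set.disjoint_left]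
    rintro y ⟨_, hy2⟩ ⟨hy3, _⟩
    linarith

theorem stmt_9 (k : ℕ) (hk : 2 ≤ k) (s : ℝ) (hs0 : -1 ≤ s) (hs1 : s ≤ 0) :
    (((Measure.pi fun _ : Fin (k - 1) => unif).prod unif)
        {p : (Fin (k - 1) → ℝ) × ℝ |
          |min (Finset.univ.inf' (Finset.univ_nonempty_iff.2 ⟨⟨0, by omega⟩⟩) p.1) s| < |p.2|}).toReal
      = ((2 : ℝ) ^ k - (1 - s) ^ k) / (k * 2 ^ (k - 1)) := by
  obtain ⟨n, hn, rfl⟩ : ∃ n, 1 ≤ n ∧ k = n + 1 := ⟨k - 1, by omega, by omega⟩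
  simp only [Nat.add_sub_cancel]
  set μ : Measure (Fin n → ℝ) := Measure.pi fun _ => unif with hμ
  have hne : (Finset.univ : Finset (Fin n)).Nonempty :=
    Finset.univ_nonempty_iff.2 ⟨⟨0, by omega⟩⟩
  set m : (Fin n → ℝ) → ℝ := fun x => min (Finset.univ.inf' hne x) s with hm_def
  have hm : Continuous m := by
    apply Continuous.min _ continuous_const
    exact Continuous.finset_inf'_apply hne fun i _ => continuous_apply i
  have hS : MeasurableSet {p : (Fin n → ℝ) × ℝ | |m p.1| < |p.2|} :=
    measurableSet_lt ((hm.comp continuous_fst).abs.measurable)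
      (continuous_snd.abs.measurable)
  show (((Measure.pi fun _ : Fin n => unif).prod unif)
      {p : (Fin n → ℝ) × ℝ | |m p.1| < |p.2|}).toReal
      = ((2 : ℝ) ^ (n + 1) - (1 - s) ^ (n + 1)) / ((n + 1 : ℕ) * 2 ^ n)
  -- a.e. every coordinate is in [-1,1]
  have hae : ∀ᵐ x ∂μ, ∀ i, x i ∈ Set.Icc (-1 : ℝ) 1 := by
    have hboxm : MeasurableSet (Set.pi Set.univ fun _ : Fin n => Set.Icc (-1 : ℝ) 1) :=
      MeasurableSet.univ_pi fun _ => measurableSet_Icc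
    have hbox : μ (Set.pi Set.univ fun _ : Fin n => Set.Icc (-1 : ℝ) 1) = 1 := by
      rw [hμ, Measure.pi_pi]
      simp [unif_Icc]
    rw [ae_iff]
    have : {x : Fin n → ℝ | ¬ ∀ i, x i ∈ Set.Icc (-1 : ℝ) 1}
        = (Set.pi Set.univ fun _ : Fin n => Set.Icc (-1 : ℝ) 1)ᶜ := by
      ext x
      simp only [Set.mem_setOf_eq, Set.mem_compl_iff, Set.mem_univ_pi]
    rw [this, measure_compl hboxm (measure_ne_top _ _), hbox, measure_univ, tsub_self]
  -- bounds on m, a.e.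
  have hmb : ∀ x : Fin n → ℝ, (∀ i, x i ∈ Set.Icc (-1 : ℝ) 1) → -1 ≤ m x ∧ m x ≤ s := by
    intro x hx
    constructor
    · apply le_min _ hs0
      apply Finset.le_inf'
      intro i _
      exact (hx i).1
    · exact min_le_right _ _
  -- the key identity
  have key : ((Measure.pi fun _ : Fin n => unif).prod unif)
      {p : (Fin n → ℝ) × ℝ | |m p.1| < |p.2|}
      = ENNReal.ofReal (((2 : ℝ) ^ (n + 1) - (1 - s) ^ (n + 1)) / ((n + 1) * 2 ^ n)) := by
    rw [← hμ, Measure.prod_apply hS]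
    have step1 : ∀ᵐ x ∂μ, unif (Prod.mk x ⁻¹' {p : (Fin n → ℝ) × ℝ | |m p.1| < |p.2|})
        = ENNReal.ofReal (1 + m x) := by
      filter_upwards [hae] with x hx
      have hb := hmb x hx
      have h1 : Prod.mk x ⁻¹' {p : (Fin n → ℝ) × ℝ | |m p.1| < |p.2|}
          = {y : ℝ | |m x| < |y|} := rfl
      rw [h1, unif_abs _ (abs_nonneg _), abs_of_nonpos (le_trans hb.2 hs1)]
      ring_nf
    rw [lintegral_congr_ae step1]
    have hf_nn : 0 ≤ᵐ[μ] fun x => 1 + m x := by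
      filter_upwards [hae] with x hx
      have := (hmb x hx).1
      simp only [Pi.zero_apply]
      linarith
    have hf_mble : AEMeasurable (fun x => 1 + m x) μ :=
      (continuous_const.add hm).measurable.aemeasurable
    rw [lintegral_eq_lintegral_meas_lt μ hf_nn hf_mble]
    -- compute μ {x | t < 1 + m x} for t > 0
    have step2 : ∀ t ∈ Set.Ioi (0 : ℝ), μ {x | t < 1 + m x}
        = (Set.Ioo (0 : ℝ) (1 + s)).indicator
            (fun t => ENNReal.ofReal (((2 - t) / 2) ^ n)) t := by
      intro t ht
      simp only [Set.mem_Ioi] at ht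
      by_cases hts : t < 1 + s
      · rw [Set.indicator_of_mem (by exact ⟨ht, hts⟩)]
        have hset : {x : Fin n → ℝ | t < 1 + m x}
            = Set.pi Set.univ fun _ : Fin n => Set.Ioi (t - 1) := by
          ext x
          simp only [Set.mem_setOf_eq, Set.mem_univ_pi, Set.mem_Ioi]
          show t < 1 + min (Finset.univ.inf' hne x) s ↔ ∀ i, t - 1 < x i
          constructor
          · intro h i
            have h0 : t - 1 < min (Finset.univ.inf' hne x) s := by linarith
            have h1 : t - 1 < Finset.univ.inf' hne x := lt_of_lt_of_le h0 (min_le_left _ _)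
            exact lt_of_lt_of_le h1 (Finset.inf'_le _ (Finset.mem_univ i))
          · intro h
            have h1 : t - 1 < Finset.univ.inf' hne x :=
              (Finset.lt_inf'_iff hne).2 fun i _ => h i
            have h2 : t - 1 < s := by linarith
            have := lt_min h1 h2
            linarith
        rw [hset, hμ, Measure.pi_pi]
        have hval : unif (Set.Ioi (t - 1)) = ENNReal.ofReal ((2 - t) / 2) := by
          rw [unif_Ioi _ (by linarith)]
          congr 1
          ring
        rw [hval, Finset.prod_const, Finset.card_univ, Fintype.card_fin,
          ← ENNReal.ofReal_pow (by linarith [hs1] : (0:ℝ) ≤ (2 - t) / 2)]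
      · rw [Set.indicator_of_notMem (by simp [Set.mem_Ioo]; intro; linarith)]
        have : {x : Fin n → ℝ | t < 1 + m x} = ∅ := by
          ext x
          simp only [Set.mem_setOf_eq, Set.mem_empty_iff_false, iff_false, not_lt]
          have : m x ≤ s := min_le_right _ _
          linarith [not_lt.mp hts]
        rw [this, measure_empty]
    rw [setLIntegral_congr_fun measurableSet_Ioi step2]
    rw [lintegral_indicator measurableSet_Ioo,
      Measure.restrict_restrict measurableSet_Ioo,
      Set.inter_eq_self_of_subset_left (fun y hy => hy.1)]
    have hg_int : IntegrableOn (fun t : ℝ => ((2 - t) / 2) ^ n) (Set.Ioo 0 (1 + s)) volume := by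
      apply (Continuous.integrableOn_Icc (by fun_prop)).mono_set Set.Ioo_subset_Icc_self
    have hg_nn : 0 ≤ᵐ[volume.restrict (Set.Ioo (0:ℝ) (1 + s))]
        fun t : ℝ => ((2 - t) / 2) ^ n := by
      filter_upwards [ae_restrict_mem measurableSet_Ioo] with t ht
      have := ht.2
      apply pow_nonneg
      linarith
    rw [← ofReal_integral_eq_lintegral_ofReal hg_int hg_nn]
    congr 1
    rw [← integral_Ioc_eq_integral_Ioo,
      ← intervalIntegral.integral_of_le (by linarith : (0:ℝ) ≤ 1 + s)]
    have comp : (∫ t in (0:ℝ)..(1 + s), ((2 - t) / 2) ^ n)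
        = (2⁻¹ : ℝ) ^ n * ∫ t in (0:ℝ)..(1 + s), (2 - t) ^ n := by
      rw [← intervalIntegral.integral_const_mul]
      congr 1
      ext t
      rw [div_pow]
      rw [inv_pow, div_eq_inv_mul]
    rw [comp, intervalIntegral.integral_comp_sub_left (fun x : ℝ => x ^ n) 2]
    rw [integral_pow]
    have hcast : ((n : ℝ) + 1) ≠ 0 := by positivity
    have h2n : ((2:ℝ) ^ n) ≠ 0 := by positivity
    rw [show (2:ℝ) - (1 + s) = 1 - s by ring, show (2:ℝ) - 0 = 2 by ring]
    have harith : (2⁻¹:ℝ) ^ n * ((2 ^ (n + 1) - (1 - s) ^ (n + 1)) / ((n:ℝ) + 1))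
        = (2 ^ (n + 1) - (1 - s) ^ (n + 1)) / (((n:ℝ) + 1) * 2 ^ n) := by
      rw [inv_pow, inv_mul_eq_div, div_div]
    rw [harith]
  rw [key, ENNReal.toReal_ofReal]
  · push_cast
    ring
  · apply div_nonneg _ (by positivity)
    have h1 : (1 - s : ℝ) ≤ 2 := by linarith
    have h2 : (0:ℝ) ≤ 1 - s := by linarith
    have := pow_le_pow_left₀ h2 h1 (n + 1)
    linarith
end
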